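/- Suppose A is a (1,−1)-matrix of order 4n² in 2n×2n blocks of size 2n such that A is a Hadamard matrix, each diagonal block equals J_{2n}, and A − I_{2n}⊗J_{2n} is skew-symmetric. Then each off-diagonal block A_{ij} (i ≠ j) satisfies A_{ij}J_{2n} = J_{2n}A_{ij} = 0, i.e., A is automatically skew-Bush-type. -/

import Mathlib

open Matrix Finset

/-- A Hadamard matrix of order `4n²` whose diagonal `2n × 2n` blocks all equal
`J_{2n}` and such that `A - I_{2n} ⊗ J_{2n}` is skew-symmetric automatically has
all off-diagonal blocks with vanishing row and column sums, i.e. it is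
skew-Bush-type. -/
theorem skew_hadamard_auto_bush (n : ℕ) (hn : 0 < n)
    (A : Matrix (Fin (2 * n) × Fin (2 * n)) (Fin (2 * n) × Fin (2 * n)) ℝ)
    (hpm : ∀ x y, A x y = 1 ∨ A x y = -1)
    (hHad : A * Aᵀ = ((4 * n ^ 2 : ℝ)) • 1)
    (hdiagblk : ∀ (i : Fin (2 * n)) (a b : Fin (2 * n)), A (i, a) (i, b) = 1)
    (hskew : ∀ x y : Fin (2 * n) × Fin (2 * n), x.1 ≠ y.1 → A x y = -A y x) :
    ∀ i j : Fin (2 * n), i ≠ j →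
      (∀ a, ∑ b, A (i, a) (j, b) = 0) ∧ (∀ b, ∑ a, A (i, a) (j, b) = 0) := by
  obtain ⟨C, hCapp⟩ : ∃ C : Matrix (Fin (2*n) × Fin (2*n)) (Fin (2*n) × Fin (2*n)) ℝ,
      ∀ x y, C x y = if x.1 = y.1 then 1 else 0 :=
    ⟨Matrix.of (fun x y => if x.1 = y.1 then 1 else 0), fun _ _ => rfl⟩
  obtain ⟨B, hBapp⟩ : ∃ B : Matrix (Fin (2*n) × Fin (2*n)) (Fin (2*n) × Fin (2*n)) ℝ,
      ∀ x y, B x y = A x y - C x y := ⟨A - C, fun _ _ => rfl⟩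
  have hAeq : A = B + C := by
    ext x y; rw [Matrix.add_apply, hBapp]; ring
  have hCT : Cᵀ = C := by
    ext x y
    simp only [transpose_apply, hCapp, eq_comm]
  have hBT : Bᵀ = -B := by
    ext x y
    simp only [transpose_apply, Matrix.neg_apply, hBapp, hCapp]
    by_cases h : x.1 = y.1
    · obtain ⟨x1, x2⟩ := x; obtain ⟨y1, y2⟩ := y
      simp only at h
      subst h
      simp [hdiagblk]
    · rw [if_neg h, if_neg (fun h' => h h'.symm), hskew x y h]
      ring
  have hCC : C * C = (2*(n:ℝ)) • C := by
    ext x y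
    rw [mul_apply, Fintype.sum_prod_type]
    have step1 : ∀ k : Fin (2*n), (∑ c : Fin (2*n), C x (k, c) * C (k, c) y)
        = ((2*n : ℕ) : ℝ) * (if x.1 = k then (if k = y.1 then (1:ℝ) else 0) else 0) := by
      intro k
      have hterm : ∀ c : Fin (2*n), C x (k, c) * C (k, c) y
          = (if x.1 = k then (if k = y.1 then (1:ℝ) else 0) else 0) := by
        intro c
        rw [hCapp, hCapp]
        by_cases h1 : x.1 = k <;> by_cases h2 : k = y.1 <;> simp [h1, h2]
      rw [Finset.sum_congr rfl fun c _ => hterm c, Finset.sum_const, Finset.card_univ,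
        Fintype.card_fin, nsmul_eq_mul]
    rw [Finset.sum_congr rfl fun k _ => step1 k]
    simp only [mul_ite, mul_one, mul_zero]
    rw [Finset.sum_ite_eq univ x.1 (fun k => if k = y.1 then ((2*n:ℕ):ℝ) else 0)]
    simp only [mem_univ, if_true, Matrix.smul_apply, hCapp, smul_eq_mul]
    by_cases h : x.1 = y.1
    · rw [if_pos h, if_pos h]; push_cast; ring
    · rw [if_neg h, if_neg h, mul_zero]
  -- Hadamard relation in terms of B and C
  have hHad' : (B + C) * (C - B) = (4 * (n:ℝ) ^ 2) • 1 := by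
    have h := hHad
    rw [hAeq, transpose_add, hBT, hCT] at h
    rw [sub_eq_neg_add]
    exact h
  have h1 := congrArg (fun M : Matrix (Fin (2*n) × Fin (2*n)) (Fin (2*n) × Fin (2*n)) ℝ
      => C * (M * C)) hHad'
  rw [show C * ((B + C) * (C - B) * C) =
      C * (B * (C * C)) - C * (B * (B * C)) + (C * C) * (C * C) - (C * C) * (B * C)
    from by noncomm_ring] at h1
  simp only [hCC, Matrix.mul_smul, Matrix.smul_mul, Matrix.mul_one, Matrix.one_mul,
    smul_smul] at h1
  rw [show (2*(n:ℝ)) * (2*↑n * (2*↑n)) = 4 * (n:ℝ)^2 * (2*↑n) from by ring] at h1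
  have key : C * (B * (B * C)) = 0 := by
    have h2 : ((2*(n:ℝ)) • (C * (B * C)) - C * (B * (B * C))
        + (4 * (n:ℝ)^2 * (2*↑n)) • C - (2*(n:ℝ)) • (C * (B * C)))
        - (4 * (n:ℝ)^2 * (2*↑n)) • C = 0 := sub_eq_zero_of_eq h1
    have h3 : -(C * (B * (B * C))) = ((2*(n:ℝ)) • (C * (B * C)) - C * (B * (B * C))
        + (4 * (n:ℝ)^2 * (2*↑n)) • C - (2*(n:ℝ)) • (C * (B * C)))
        - (4 * (n:ℝ)^2 * (2*↑n)) • C := by abel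
    rw [h2] at h3
    exact neg_eq_zero.mp h3
  have hE : (B * C)ᵀ * (B * C) = 0 := by
    rw [transpose_mul, hCT, hBT,
      show C * -B * (B * C) = -(C * (B * (B * C))) from by noncomm_ring, key, neg_zero]
  have hBC : B * C = 0 := by
    ext x y
    have h0 : ((B * C)ᵀ * (B * C)) y y = 0 := by rw [hE]; rfl
    rw [mul_apply] at h0
    simp only [transpose_apply] at h0
    have h4 := (Finset.sum_eq_zero_iff_of_nonneg
      (fun z _ => mul_self_nonneg ((B*C) z y))).mp h0 x (mem_univ x)
    simp only [Matrix.zero_apply]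
    exact mul_self_eq_zero.mp h4
  have hCB : C * B = 0 := by
    have h5 : (B * C)ᵀ = 0 := by rw [hBC, transpose_zero]
    rw [transpose_mul, hCT, hBT] at h5
    have h6 : -(C * B) = 0 := by rw [← h5]; noncomm_ring
    exact neg_eq_zero.mp h6
  -- extraction of the entrywise statements
  intro i j hij
  have hCij : ∀ a b : Fin (2*n), C (i, a) (j, b) = 0 := by
    intro a b; rw [hCapp]; exact if_neg hij
  constructor
  · intro a
    have h7 : (B * C) (i, a) (j, a) = 0 := by rw [hBC]; rfl
    rw [mul_apply, Fintype.sum_prod_type] at h7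
    have hterm : ∀ (k c : Fin (2*n)), B (i,a) (k,c) * C (k,c) (j,a)
        = if k = j then B (i,a) (k,c) else 0 := by
      intro k c
      rw [hCapp]
      by_cases h : k = j <;> simp [h]
    rw [Finset.sum_congr rfl fun k _ => Finset.sum_congr rfl fun c _ => hterm k c] at h7
    have hinner : ∀ k : Fin (2*n), (∑ c : Fin (2*n), if k = j then B (i,a) (k,c) else 0)
        = if k = j then (∑ c : Fin (2*n), B (i,a) (j,c)) else 0 := by
      intro k
      by_cases h : k = j
      · subst h; simp
      · simp [h]
    rw [Finset.sum_congr rfl fun k _ => hinner k,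
      Finset.sum_ite_eq' univ j (fun _ => ∑ c : Fin (2*n), B (i,a) (j,c))] at h7
    rw [if_pos (mem_univ j)] at h7
    calc ∑ b, A (i, a) (j, b) = ∑ b, B (i, a) (j, b) :=
          Finset.sum_congr rfl fun b _ => by rw [hBapp, hCij, sub_zero]
      _ = 0 := h7
  · intro b
    have h7 : (C * B) (i, b) (j, b) = 0 := by rw [hCB]; rfl
    rw [mul_apply, Fintype.sum_prod_type] at h7
    have hterm : ∀ (k c : Fin (2*n)), C (i,b) (k,c) * B (k,c) (j,b)
        = if i = k then B (k,c) (j,b) else 0 := by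
      intro k c
      rw [hCapp]
      by_cases h : i = k <;> simp [h]
    rw [Finset.sum_congr rfl fun k _ => Finset.sum_congr rfl fun c _ => hterm k c] at h7
    have hinner : ∀ k : Fin (2*n), (∑ c : Fin (2*n), if i = k then B (k,c) (j,b) else 0)
        = if i = k then (∑ c : Fin (2*n), B (i,c) (j,b)) else 0 := by
      intro k
      by_cases h : i = k
      · subst h; simp
      · simp [h]
    rw [Finset.sum_congr rfl fun k _ => hinner k,
      Finset.sum_ite_eq univ i (fun _ => ∑ c : Fin (2*n), B (i,c) (j,b))] at h7
    rw [if_pos (mem_univ i)] at h7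
    calc ∑ a, A (i, a) (j, b) = ∑ a, B (i, a) (j, b) :=
          Finset.sum_congr rfl fun a _ => by rw [hBapp, hCij, sub_zero]
      _ = 0 := h7
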